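/- Let γ : ℝ → ℝ be continuous with γ 0 = 0 and γ strictly increasing on [0, ∞), and let g : ℝ → ℝ be differentiable on [0, ∞) with g t ≥ 0 for all t ≥ 0 and deriv g t ≤ −γ (g t) for all t ≥ 0. Then g t → 0 as t → ∞. -/

import Mathlib

open Filter

/-- comparison lemma underlying global attractivity.  If `g` is
nonnegative and differentiable on `[0, ∞)` with `g' t ≤ -γ (g t)` for a
continuous function `γ` vanishing at `0` and strictly increasing on
`[0, ∞)`, then `g t → 0` as `t → ∞`. -/
theorem comparison_lemma_tendsto_zero
    (γ : ℝ → ℝ) (hγc : Continuous γ) (hγ0 : γ 0 = 0)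
    (hγmono : StrictMonoOn γ (Set.Ici (0 : ℝ)))
    (g : ℝ → ℝ)
    (hgdiff : ∀ t ≥ (0 : ℝ), DifferentiableAt ℝ g t)
    (hgnn : ∀ t ≥ (0 : ℝ), 0 ≤ g t)
    (hgderiv : ∀ t ≥ (0 : ℝ), deriv g t ≤ -γ (g t)) :
    Tendsto g atTop (nhds 0) := by
  have hint : interior (Set.Ici (0:ℝ)) = Set.Ioi 0 := interior_Ici
  have hγnn : ∀ x ≥ (0:ℝ), 0 ≤ γ x := by
    intro x hx
    rcases eq_or_lt_of_le hx with h | h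
    · simp [← h, hγ0]
    · have := hγmono (le_refl (0:ℝ)) (le_of_lt h) h
      linarith [hγ0]
  have hgcont : ContinuousOn g (Set.Ici 0) := fun t ht =>
    (hgdiff t ht).continuousAt.continuousWithinAt
  have hganti : AntitoneOn g (Set.Ici 0) := by
    apply antitoneOn_of_deriv_nonpos (convex_Ici 0) hgcont
    · rw [hint]; exact fun x hx => (hgdiff x (le_of_lt hx)).differentiableWithinAt
    · rw [hint]; intro x hx
      have hx' : (0:ℝ) ≤ x := le_of_lt hx
      have := hgderiv x hx'
      have := hγnn (g x) (hgnn x hx')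
      linarith
  -- the auxiliary antitone function
  set h : ℝ → ℝ := fun t => g (max t 0) with hh
  have hanti : Antitone h := by
    intro s t hst
    exact hganti (le_max_right s 0) (le_max_right t 0) (max_le_max hst le_rfl)
  have hbdd : BddBelow (Set.range h) := by
    refine ⟨0, ?_⟩
    rintro _ ⟨t, rfl⟩
    exact hgnn _ (le_max_right t 0)
  have htend : Tendsto h atTop (nhds (⨅ t, h t)) := tendsto_atTop_ciInf hanti hbdd
  set L := ⨅ t, h t with hL
  have hLnn : 0 ≤ L := le_ciInf fun t => hgnn _ (le_max_right t 0)
  have hLle : ∀ t ≥ (0:ℝ), L ≤ g t := by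
    intro t ht
    have : h t = g t := by simp [hh, max_eq_left ht]
    rw [← this]
    exact ciInf_le hbdd t
  have hL0 : L = 0 := by
    by_contra hne
    have hLpos : 0 < L := lt_of_le_of_ne hLnn (Ne.symm hne)
    have hγL : 0 < γ L := by
      have := hγmono (le_refl (0:ℝ)) (le_of_lt hLpos) hLpos
      linarith [hγ0]
    -- φ t = g t + γ L * t is antitone on Ici 0
    set φ : ℝ → ℝ := fun t => g t + γ L * t with hφ
    have hφanti : AntitoneOn φ (Set.Ici 0) := by
      apply antitoneOn_of_deriv_nonpos (convex_Ici 0)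
      · exact hgcont.add (continuous_const.mul continuous_id).continuousOn
      · rw [hint]
        exact fun x hx => ((hgdiff x (le_of_lt hx)).add
          ((differentiable_const _).mul differentiable_id x)).differentiableWithinAt
      · rw [hint]; intro x hx
        have hx' : (0:ℝ) ≤ x := le_of_lt hx
        have hd : deriv φ x = deriv g x + γ L := by
          have := ((hgdiff x hx').hasDerivAt.add
            ((hasDerivAt_id x).const_mul (γ L))).deriv
          rw [mul_one] at this; exact this
        have h1 : deriv g x ≤ -γ (g x) := hgderiv x hx'
        have h2 : γ L ≤ γ (g x) :=
          (hγmono.monotoneOn) (Set.mem_Ici.2 (le_of_lt hLpos))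
            (Set.mem_Ici.2 (hgnn x hx')) (hLle x hx')
        rw [hd]; linarith
    -- pick t large
    set T : ℝ := (g 0 + 1) / γ L with hT
    have hTpos : 0 < T := div_pos (by linarith [hgnn 0 le_rfl]) hγL
    have hcomp : φ T ≤ φ 0 := hφanti (Set.mem_Ici.2 le_rfl) (Set.mem_Ici.2 hTpos.le) hTpos.le
    have : g T + γ L * T ≤ g 0 := by simpa [hφ] using hcomp
    have hgT : g T ≤ g 0 - γ L * T := by linarith
    have : γ L * T = g 0 + 1 := by
      rw [hT, mul_div_cancel₀ _ (ne_of_gt hγL)]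
    have hgTneg : g T ≤ -1 := by linarith
    have := hgnn T hTpos.le
    linarith
  have : Tendsto h atTop (nhds 0) := hL0 ▸ htend
  refine this.congr' ?_
  filter_upwards [eventually_ge_atTop (0:ℝ)] with t ht
  simp [hh, max_eq_left ht]
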